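/- arXiv:1412.8126 — 2 statements merged into one kernel-verified Lean document; each statement's English description precedes it below -/
import Mathlib

section
/- For a convex superlinear L : ℝⁿ → ℝ and Lipschitz f, the Hopf–Lax function u(y,t) = inf_x ( f(x) + t·L((y−x)/t) ) satisfies the semigroup property: for 0 < s < t, u(y,t) = inf_z ( u(z,s) + (t−s)·L((y−z)/(t−s)) ). -/
open Set

section aux

variable {n : ℕ}

-- Convexity inequality: t * L(t⁻¹•(y-x)) ≤ s * L(s⁻¹•(z-x)) + (t-s) * L((t-s)⁻¹•(y-z))
lemma hl_convex_ineq {n : ℕ} (L : EuclideanSpace ℝ (Fin n) → ℝ)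
    (hLconv : ConvexOn ℝ univ L) (y z x : EuclideanSpace ℝ (Fin n)) (s t : ℝ)
    (hs : 0 < s) (hst : s < t) :
    t * L (t⁻¹ • (y - x)) ≤ s * L (s⁻¹ • (z - x)) + (t - s) * L ((t - s)⁻¹ • (y - z)) := by
  have ht : 0 < t := hs.trans hst
  have hts : 0 < t - s := by linarith
  have ha : (0:ℝ) ≤ s / t := by positivity
  have hb : (0:ℝ) ≤ (t - s) / t := by positivity
  have hab : s / t + (t - s) / t = 1 := by field_simp; ring
  have hcomb := hLconv.2 (mem_univ (s⁻¹ • (z - x))) (mem_univ ((t - s)⁻¹ • (y - z))) ha hb hab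
  have hpt : (s / t) • (s⁻¹ • (z - x)) + ((t - s) / t) • ((t - s)⁻¹ • (y - z))
      = t⁻¹ • (y - x) := by
    rw [smul_smul, smul_smul]
    rw [div_mul_eq_mul_div, mul_inv_cancel₀ hs.ne', div_mul_eq_mul_div,
      mul_inv_cancel₀ hts.ne']
    rw [← smul_add, one_div]
    congr 1
    abel
  rw [hpt] at hcomb
  have := mul_le_mul_of_nonneg_left hcomb ht.le
  calc t * L (t⁻¹ • (y - x))
      ≤ t * (s / t * L (s⁻¹ • (z - x)) + (t - s) / t * L ((t - s)⁻¹ • (y - z))) := this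
    _ = s * L (s⁻¹ • (z - x)) + (t - s) * L ((t - s)⁻¹ • (y - z)) := by
        field_simp

end aux

/-- Semigroup property of the Hopf–Lax formula: for `0 < s < t`,
`u y t = inf_z ( u z s + (t−s) L((y−z)/(t−s)) )`. -/
theorem hopfLax_semigroup {n : ℕ}
    (L : EuclideanSpace ℝ (Fin n) → ℝ)
    (hLconv : ConvexOn ℝ univ L)
    (hLsuper : ∀ C : ℝ, ∃ R : ℝ, ∀ v : EuclideanSpace ℝ (Fin n), R ≤ ‖v‖ → C * ‖v‖ ≤ L v)
    (f : EuclideanSpace ℝ (Fin n) → ℝ) (K : NNReal) (hf : LipschitzWith K f)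
    (u : EuclideanSpace ℝ (Fin n) → ℝ → ℝ)
    (hu : ∀ y t, 0 < t →
      u y t = sInf {A : ℝ | ∃ x : EuclideanSpace ℝ (Fin n), A = f x + t * L (t⁻¹ • (y - x))}) :
    ∀ (y : EuclideanSpace ℝ (Fin n)) (s t : ℝ), 0 < s → s < t →
      u y t = sInf {A : ℝ | ∃ z : EuclideanSpace ℝ (Fin n),
        A = u z s + (t - s) * L ((t - s)⁻¹ • (y - z))} := by
  -- superlinearity constant
  obtain ⟨R₀, hR₀⟩ := hLsuper ((K : ℝ) + 1)
  set R : ℝ := max R₀ 0 with hRdef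
  have hR : 0 ≤ R := le_max_right _ _
  have hRsuper : ∀ v : EuclideanSpace ℝ (Fin n), R ≤ ‖v‖ → ((K : ℝ) + 1) * ‖v‖ ≤ L v :=
    fun v hv => hR₀ v ((le_max_left _ _).trans hv)
  -- continuity of L, min on closed ball
  have hLcont : Continuous L := by
    rw [← continuousOn_univ]
    exact hLconv.continuousOn isOpen_univ
  obtain ⟨v₀, _, hv₀⟩ := (isCompact_closedBall (0 : EuclideanSpace ℝ (Fin n)) R).exists_isMinOn
    ⟨0, Metric.mem_closedBall_self hR⟩ hLcont.continuousOn
  set m : ℝ := min (L v₀) 0 with hmdef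
  have hm0 : m ≤ 0 := min_le_right _ _
  have hmball : ∀ v : EuclideanSpace ℝ (Fin n), ‖v‖ ≤ R → m ≤ L v := by
    intro v hv
    exact (min_le_left _ _).trans (hv₀ (by simpa [Metric.mem_closedBall, dist_zero_right] using hv))
  -- Lipschitz bound for f in ℝ
  have hfK : ∀ a b : EuclideanSpace ℝ (Fin n), f a - f b ≤ (K : ℝ) * ‖a - b‖ := by
    intro a b
    have := hf.dist_le_mul a b
    rw [Real.dist_eq, dist_eq_norm] at this
    exact (abs_le.1 this).2
  -- key lower bound
  have key : ∀ (x y : EuclideanSpace ℝ (Fin n)) (t : ℝ), 0 < t →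
      f y - (K : ℝ) * t * R + t * m ≤ f x + t * L (t⁻¹ • (y - x)) := by
    intro x y t ht
    set v := t⁻¹ • (y - x) with hvdef
    have hnv : ‖y - x‖ = t * ‖v‖ := by
      rw [hvdef, norm_smul, norm_inv, Real.norm_eq_abs, abs_of_pos ht]
      field_simp
    have hfx : f y - (K : ℝ) * t * ‖v‖ ≤ f x := by
      have := hfK y x
      rw [hnv] at this
      linarith [this]
    rcases le_or_gt R ‖v‖ with h | h
    · have hLv := hRsuper v h
      have h1 : f y ≤ f x + t * L v := by
        nlinarith [norm_nonneg v, ht.le, mul_le_mul_of_nonneg_left hLv ht.le]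
      nlinarith [mul_nonneg (mul_nonneg (K.coe_nonneg) ht.le) hR,
        mul_nonpos_of_nonneg_of_nonpos ht.le hm0]
    · have hLv := hmball v h.le
      have h2 : t * m ≤ t * L v := mul_le_mul_of_nonneg_left hLv ht.le
      nlinarith [mul_le_mul_of_nonneg_left h.le
        (mul_nonneg (K.coe_nonneg) ht.le)]
  -- the inner sets
  intro y s t hs hst
  have ht : 0 < t := hs.trans hst
  have hts : 0 < t - s := by linarith
  set S : EuclideanSpace ℝ (Fin n) → ℝ → Set ℝ :=
    fun y t => {A : ℝ | ∃ x : EuclideanSpace ℝ (Fin n), A = f x + t * L (t⁻¹ • (y - x))}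
    with hSdef
  have hSne : ∀ y t, (S y t).Nonempty := fun y t => ⟨_, y, rfl⟩
  have hSbdd : ∀ (y : EuclideanSpace ℝ (Fin n)) (t : ℝ), 0 < t →
      ∀ A ∈ S y t, f y - (K : ℝ) * t * R + t * m ≤ A := by
    rintro y t ht A ⟨x, rfl⟩
    exact key x y t ht
  have huS : ∀ (y : EuclideanSpace ℝ (Fin n)) (t : ℝ) (ht : 0 < t), u y t = sInf (S y t) :=
    fun y t ht => hu y t ht
  have huB : ∀ (z : EuclideanSpace ℝ (Fin n)) (τ : ℝ), 0 < τ →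
      f z - (K : ℝ) * τ * R + τ * m ≤ u z τ := by
    intro z τ hτ
    rw [huS z τ hτ]
    exact le_csInf (hSne z τ) (hSbdd z τ hτ)
  have huLe : ∀ (z : EuclideanSpace ℝ (Fin n)) (τ : ℝ) (hτ : 0 < τ)
      (x : EuclideanSpace ℝ (Fin n)), u z τ ≤ f x + τ * L (τ⁻¹ • (z - x)) := by
    intro z τ hτ x
    rw [huS z τ hτ]
    exact csInf_le ⟨_, hSbdd z τ hτ⟩ ⟨x, rfl⟩
  set T : Set ℝ := {A : ℝ | ∃ z : EuclideanSpace ℝ (Fin n),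
      A = u z s + (t - s) * L ((t - s)⁻¹ • (y - z))} with hTdef
  have hTne : T.Nonempty := ⟨_, y, rfl⟩
  -- lower bound on T
  have hTbdd : ∀ A ∈ T, f y - (K : ℝ) * t * R + t * m ≤ A := by
    rintro A ⟨z, rfl⟩
    have h1 := huB z s hs
    set w := (t - s)⁻¹ • (y - z) with hwdef
    have hnw : ‖y - z‖ = (t - s) * ‖w‖ := by
      rw [hwdef, norm_smul, norm_inv, Real.norm_eq_abs, abs_of_pos hts]
      field_simp
    have hfz : f y - (K : ℝ) * (t - s) * ‖w‖ ≤ f z := by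
      have := hfK y z
      rw [hnw] at this
      linarith [this]
    rcases le_or_gt R ‖w‖ with h | h
    · have hLw := hRsuper w h
      have := mul_le_mul_of_nonneg_left hLw hts.le
      nlinarith [norm_nonneg w, mul_nonneg (mul_nonneg (K.coe_nonneg) hts.le) hR,
        mul_nonpos_of_nonneg_of_nonpos hts.le hm0]
    · have hLw := hmball w h.le
      have := mul_le_mul_of_nonneg_left hLw hts.le
      nlinarith [mul_le_mul_of_nonneg_left h.le (mul_nonneg (K.coe_nonneg) hts.le)]
  refine le_antisymm ?_ ?_
  · -- u y t ≤ sInf T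
    rw [huS y t ht]
    refine le_csInf hTne ?_
    rintro A ⟨z, rfl⟩
    have hzs : sInf (S y t) - (t - s) * L ((t - s)⁻¹ • (y - z)) ≤ u z s := by
      rw [huS z s hs]
      refine le_csInf (hSne z s) ?_
      rintro b ⟨x, rfl⟩
      have hci := hl_convex_ineq L hLconv y z x s t hs hst
      have hle : sInf (S y t) ≤ f x + t * L (t⁻¹ • (y - x)) :=
        csInf_le ⟨_, hSbdd y t ht⟩ ⟨x, rfl⟩
      linarith
    linarith
  · -- sInf T ≤ u y t
    rw [huS y t ht]
    refine le_csInf (hSne y t) ?_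
    rintro b ⟨x, rfl⟩
    set z : EuclideanSpace ℝ (Fin n) := x + (s / t) • (y - x) with hzdef
    have hz1 : s⁻¹ • (z - x) = t⁻¹ • (y - x) := by
      rw [hzdef]
      rw [add_sub_cancel_left, smul_smul]
      congr 1
      field_simp
    have hz2 : (t - s)⁻¹ • (y - z) = t⁻¹ • (y - x) := by
      have : y - z = ((t - s) / t) • (y - x) := by
        rw [hzdef]
        rw [sub_div, div_self ht.ne', sub_smul, one_smul]
        abel
      rw [this, smul_smul]
      congr 1
      field_simp
    have hmem : u z s + (t - s) * L ((t - s)⁻¹ • (y - z)) ∈ T := ⟨z, rfl⟩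
    have h1 : sInf T ≤ u z s + (t - s) * L ((t - s)⁻¹ • (y - z)) :=
      csInf_le ⟨_, hTbdd⟩ hmem
    have h2 : u z s ≤ f x + s * L (s⁻¹ • (z - x)) := huLe z s hs x
    rw [hz1] at h2
    rw [hz2] at h1
    have : s * L (t⁻¹ • (y - x)) + (t - s) * L (t⁻¹ • (y - x)) = t * L (t⁻¹ • (y - x)) := by
      ring
    linarith [h1, h2]
end

section
/- With Φ_k as above and k ≥ c(L): if Φ_k is finite then Φ_k(x,y) + Φ_k(y,x) ≥ 0 for all x,y (so the symmetrization d_k(x,y) = Φ_k(x,y) + Φ_k(y,x) is a pseudo-metric), and for k < c(L) one has Φ_k ≡ −∞ on some pair of points. -/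
set_option linter.unusedVariables false
set_option linter.unusedSectionVars false
set_option linter.unnecessarySimpa false
set_option maxHeartbeats 1000000

open Set intervalIntegral MeasureTheory
open scoped Interval

namespace CurveAux

variable {F : Type*} [NormedAddCommGroup F] [NormedSpace ℝ F]
variable {L : F → F → ℝ} (hL : Continuous (fun q : F × F => L q.1 q.2))
variable {f g γ : ℝ → F} {a b c k s T : ℝ}


/-- the integrand using the full derivative -/
noncomputable def itg (L : F → F → ℝ) (k : ℝ) (γ : ℝ → F) (t : ℝ) : ℝ :=
  L (γ t) (deriv γ t) + k

/-- the integrand using the within-derivative -/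
noncomputable def itgW (L : F → F → ℝ) (k a b : ℝ) (γ : ℝ → F) (t : ℝ) : ℝ :=
  L (γ t) (derivWithin γ (Icc a b) t) + k

lemma itg_eq_itgW (hγ : ContDiffOn ℝ 1 γ (Icc a b)) {t : ℝ} (ht : t ∈ Ioo a b) :
    itg L k γ t = itgW L k a b γ t := by
  unfold itg itgW
  rw [derivWithin_of_mem_nhds (Icc_mem_nhds ht.1 ht.2)]

include hL in
lemma itgW_continuousOn (hab : a < b) (hγ : ContDiffOn ℝ 1 γ (Icc a b)) :
    ContinuousOn (itgW L k a b γ) (Icc a b) := by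
  have h1 : ContinuousOn γ (Icc a b) := hγ.continuousOn
  have h2 : ContinuousOn (derivWithin γ (Icc a b)) (Icc a b) :=
    hγ.continuousOn_derivWithin (uniqueDiffOn_Icc hab) le_rfl
  exact ((hL.comp_continuousOn (h1.prodMk h2)).add continuousOn_const)

include hL in
lemma itgW_intervalIntegrable (hab : a < b) (hγ : ContDiffOn ℝ 1 γ (Icc a b)) :
    IntervalIntegrable (itgW L k a b γ) volume a b :=
  (itgW_continuousOn hL hab hγ).intervalIntegrable_of_Icc hab.le

lemma ae_ne (x : ℝ) : ∀ᵐ t : ℝ, t ≠ x := by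
  rw [MeasureTheory.ae_iff]
  have : {t : ℝ | ¬ t ≠ x} = {x} := by ext t; simp
  rw [this]
  exact Real.volume_singleton

lemma itg_eqae (hab : a < b) (hγ : ContDiffOn ℝ 1 γ (Icc a b)) :
    ∀ᵐ t : ℝ, t ∈ Ι a b → itg L k γ t = itgW L k a b γ t := by
  filter_upwards [ae_ne a, ae_ne b] with t ha hb ht
  rw [uIoc_of_le hab.le] at ht
  exact itg_eq_itgW hγ ⟨lt_of_le_of_ne ht.1.le (Ne.symm (by simpa using ha)), lt_of_le_of_ne ht.2 hb⟩

include hL in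
lemma itg_intervalIntegrable (hab : a < b) (hγ : ContDiffOn ℝ 1 γ (Icc a b)) :
    IntervalIntegrable (itg L k γ) volume a b := by
  refine (itgW_intervalIntegrable hL (k := k) hab hγ).congr_ae ?_
  have h := itg_eqae (L := L) (k := k) hab hγ
  exact (ae_restrict_iff' measurableSet_uIoc).2 (h.mono fun t h ht => (h ht).symm)

include hL in
lemma itg_integral_eq (hab : a < b) (hγ : ContDiffOn ℝ 1 γ (Icc a b)) :
    ∫ t in a..b, itg L k γ t = ∫ t in a..b, itgW L k a b γ t :=
  intervalIntegral.integral_congr_ae (itg_eqae hab hγ)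



noncomputable def glue (b : ℝ) (f g : ℝ → F) (t : ℝ) : F := if t ≤ b then f t else g t

lemma glue_eqOn_left : EqOn (glue b f g) f (Icc a b) := fun _ ht => if_pos ht.2

lemma glue_eqOn_right (hfg : f b = g b) : EqOn (glue b f g) g (Icc b c) := by
  intro t ht
  rcases eq_or_lt_of_le ht.1 with h | h
  · simp [glue, ← h, hfg]
  · simp [glue, not_le.2 h]

lemma glue_continuousOn (hab : a ≤ b) (hbc : b ≤ c) (hf : ContinuousOn f (Icc a b))
    (hg : ContinuousOn g (Icc b c)) (hfg : f b = g b) :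
    ContinuousOn (glue b f g) (Icc a c) := by
  intro t ht
  have h1 : ContinuousWithinAt (glue b f g) (Icc a b) t := by
    rcases le_or_gt t b with h | h
    · exact ((hf t ⟨ht.1, h⟩).congr glue_eqOn_left (if_pos h))
    · exact continuousWithinAt_of_notMem_closure (by
        rw [isClosed_Icc.closure_eq]; exact fun hm => absurd hm.2 (not_le.2 h))
  have h2 : ContinuousWithinAt (glue b f g) (Icc b c) t := by
    rcases le_or_gt b t with h | h
    · refine (hg t ⟨h, ht.2⟩).congr (glue_eqOn_right hfg) ?_
      rcases eq_or_lt_of_le h with h' | h'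
      · simp [glue, ← h', hfg]
      · simp [glue, not_le.2 h']
    · exact continuousWithinAt_of_notMem_closure (by
        rw [isClosed_Icc.closure_eq]; exact fun hm => absurd hm.1 (not_le.2 h))
  have := h1.union h2
  rwa [Icc_union_Icc_eq_Icc hab hbc] at this

lemma glue_hasDeriv (hab : a < b) (hbc : b < c)
    (hf : ContDiffOn ℝ 1 f (Icc a b)) (hg : ContDiffOn ℝ 1 g (Icc b c))
    (hfg : f b = g b)
    (hd : derivWithin f (Icc a b) b = derivWithin g (Icc b c) b) :
    ∀ t ∈ Icc a c, HasDerivWithinAt (glue b f g)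
      (glue b (derivWithin f (Icc a b)) (derivWithin g (Icc b c)) t) (Icc a c) t := by
  have hf' : ∀ t ∈ Icc a b, HasDerivWithinAt f (derivWithin f (Icc a b) t) (Icc a b) t :=
    fun t ht => ((hf.differentiableOn one_ne_zero) t ht).hasDerivWithinAt
  have hg' : ∀ t ∈ Icc b c, HasDerivWithinAt g (derivWithin g (Icc b c) t) (Icc b c) t :=
    fun t ht => ((hg.differentiableOn one_ne_zero) t ht).hasDerivWithinAt
  intro t ht
  rcases lt_trichotomy t b with h | h | h
  · have h1 : HasDerivWithinAt f (derivWithin f (Icc a b) t) (Icc a c ∩ Iio b) t :=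
      (hf' t ⟨ht.1, h.le⟩).mono (fun u hu => ⟨hu.1.1, hu.2.le⟩)
    have h2 : HasDerivWithinAt f (derivWithin f (Icc a b) t) (Icc a c) t :=
      h1.mono_of_mem_nhdsWithin (inter_mem_nhdsWithin _ (Iio_mem_nhds h))
    have h3 : HasDerivWithinAt (glue b f g) (derivWithin f (Icc a b) t) (Icc a c) t := by
      refine h2.congr_of_eventuallyEq ?_ (if_pos h.le)
      filter_upwards [nhdsWithin_le_nhds (Iio_mem_nhds h)] with u hu
      exact if_pos (le_of_lt hu)
    simpa [glue, if_pos h.le] using h3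
  · subst h
    have h1 : HasDerivWithinAt (glue t f g) (derivWithin f (Icc a t) t) (Icc a t) t :=
      (hf' t ⟨hab.le, le_rfl⟩).congr (fun u hu => glue_eqOn_left hu) (if_pos le_rfl)
    have h2 : HasDerivWithinAt (glue t f g) (derivWithin f (Icc a t) t) (Icc t c) t := by
      rw [hd]
      exact (hg' t ⟨le_rfl, hbc.le⟩).congr (fun u hu => glue_eqOn_right hfg hu)
        (by simp [glue, hfg])
    have := h1.union h2
    rw [Icc_union_Icc_eq_Icc hab.le hbc.le] at this
    simpa [glue] using this
  · have h1 : HasDerivWithinAt g (derivWithin g (Icc b c) t) (Icc a c ∩ Ioi b) t :=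
      (hg' t ⟨h.le, ht.2⟩).mono (fun u hu => ⟨hu.2.le, hu.1.2⟩)
    have h2 : HasDerivWithinAt g (derivWithin g (Icc b c) t) (Icc a c) t :=
      h1.mono_of_mem_nhdsWithin (inter_mem_nhdsWithin _ (Ioi_mem_nhds h))
    have h3 : HasDerivWithinAt (glue b f g) (derivWithin g (Icc b c) t) (Icc a c) t := by
      refine h2.congr_of_eventuallyEq ?_ (if_neg (not_le.2 h))
      filter_upwards [nhdsWithin_le_nhds (Ioi_mem_nhds h)] with u hu
      exact if_neg (not_le.2 hu)
    simpa [glue, not_le.2 h] using h3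

lemma glue_contDiffOn (hab : a < b) (hbc : b < c)
    (hf : ContDiffOn ℝ 1 f (Icc a b)) (hg : ContDiffOn ℝ 1 g (Icc b c))
    (hfg : f b = g b)
    (hd : derivWithin f (Icc a b) b = derivWithin g (Icc b c) b) :
    ContDiffOn ℝ 1 (glue b f g) (Icc a c) ∧
    EqOn (derivWithin (glue b f g) (Icc a c))
      (glue b (derivWithin f (Icc a b)) (derivWithin g (Icc b c))) (Icc a c) := by
  have hac : a < c := hab.trans hbc
  have hder := glue_hasDeriv hab hbc hf hg hfg hd
  have hEq : EqOn (derivWithin (glue b f g) (Icc a c))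
      (glue b (derivWithin f (Icc a b)) (derivWithin g (Icc b c))) (Icc a c) :=
    fun t ht => (hder t ht).derivWithin ((uniqueDiffOn_Icc hac) t ht)
  refine ⟨?_, hEq⟩
  rw [show (1 : WithTop ℕ∞) = 0 + 1 by norm_num,
    contDiffOn_succ_iff_derivWithin (uniqueDiffOn_Icc hac)]
  refine ⟨fun t ht => (hder t ht).differentiableWithinAt, by simp, ?_⟩
  rw [contDiffOn_zero]
  refine ContinuousOn.congr ?_ hEq
  exact glue_continuousOn hab.le hbc.le
    (hf.continuousOn_derivWithin (uniqueDiffOn_Icc hab) le_rfl)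
    (hg.continuousOn_derivWithin (uniqueDiffOn_Icc hbc) le_rfl) hd



include hL in
lemma glue_integral (hab : a < b) (hbc : b < c)
    (hf : ContDiffOn ℝ 1 f (Icc a b)) (hg : ContDiffOn ℝ 1 g (Icc b c))
    (hfg : f b = g b)
    (hd : derivWithin f (Icc a b) b = derivWithin g (Icc b c) b) :
    ∫ t in a..c, itg L k (glue b f g) t
      = (∫ t in a..b, itg L k f t) + ∫ t in b..c, itg L k g t := by
  have hglue := (glue_contDiffOn hab hbc hf hg hfg hd).1
  have h1 : IntervalIntegrable (itg L k (glue b f g)) volume a b :=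
    itg_intervalIntegrable hL hab (hglue.mono (Icc_subset_Icc le_rfl hbc.le))
  have h2 : IntervalIntegrable (itg L k (glue b f g)) volume b c :=
    itg_intervalIntegrable hL hbc (hglue.mono (Icc_subset_Icc hab.le le_rfl))
  have e1 : ∫ t in a..b, itg L k (glue b f g) t = ∫ t in a..b, itg L k f t := by
    apply intervalIntegral.integral_congr_ae
    filter_upwards [ae_ne a, ae_ne b] with t hta htb ht
    rw [uIoc_of_le hab.le] at ht
    have hto : t ∈ Ioo a b :=
      ⟨lt_of_le_of_ne ht.1.le (Ne.symm (by simpa using hta)), lt_of_le_of_ne ht.2 htb⟩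
    have hev : glue b f g =ᶠ[nhds t] f :=
      Filter.eventually_of_mem (Iio_mem_nhds hto.2) fun u hu => if_pos (le_of_lt hu)
    show itg L k (glue b f g) t = itg L k f t
    unfold itg
    rw [hev.deriv_eq, show glue b f g t = f t from if_pos hto.2.le]
  have e2 : ∫ t in b..c, itg L k (glue b f g) t = ∫ t in b..c, itg L k g t := by
    apply intervalIntegral.integral_congr_ae
    filter_upwards [ae_ne b, ae_ne c] with t htb htc ht
    rw [uIoc_of_le hbc.le] at ht
    have hto : t ∈ Ioo b c :=
      ⟨lt_of_le_of_ne ht.1.le (Ne.symm (by simpa using htb)), lt_of_le_of_ne ht.2 htc⟩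
    have hev : glue b f g =ᶠ[nhds t] g :=
      Filter.eventually_of_mem (Ioi_mem_nhds hto.1) fun u hu => if_neg (not_le.2 hu)
    show itg L k (glue b f g) t = itg L k g t
    unfold itg
    rw [hev.deriv_eq, show glue b f g t = g t from if_neg (not_le.2 hto.1)]
  rw [← e1, ← e2]
  exact (integral_add_adjacent_intervals h1 h2).symm

lemma shift_contDiffOn (hγ : ContDiffOn ℝ 1 γ (Icc 0 T)) :
    ContDiffOn ℝ 1 (fun t => γ (t - s)) (Icc s (s + T)) := by
  refine hγ.comp ((contDiff_id.sub contDiff_const).contDiffOn) (fun u hu => ?_)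
  simp only [mem_Icc] at hu ⊢
  exact ⟨by linarith [hu.1], by linarith [hu.2]⟩

lemma shift_derivWithin (hT : 0 < T) (hγ : ContDiffOn ℝ 1 γ (Icc 0 T))
    {t : ℝ} (ht : t ∈ Icc s (s + T)) :
    derivWithin (fun u => γ (u - s)) (Icc s (s + T)) t = derivWithin γ (Icc 0 T) (t - s) := by
  have hts : t - s ∈ Icc (0:ℝ) T := ⟨by linarith [ht.1], by linarith [ht.2]⟩
  have hv : HasDerivWithinAt γ (derivWithin γ (Icc 0 T) (t - s)) (Icc 0 T) (t - s) :=
    ((hγ.differentiableOn one_ne_zero) _ hts).hasDerivWithinAt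
  have hs : HasDerivWithinAt (fun u : ℝ => u - s) 1 (Icc s (s + T)) t :=
    ((hasDerivAt_id t).sub_const s).hasDerivWithinAt
  have hcomp := HasDerivWithinAt.scomp t hv hs
    (fun u hu => show u - s ∈ Icc 0 T from ⟨by linarith [hu.1], by linarith [hu.2]⟩)
  have := hcomp.derivWithin ((uniqueDiffOn_Icc (by linarith)) t ht)
  simpa [Function.comp_def] using this

lemma shift_integral :
    ∫ t in s..(s + T), itg L k (fun u => γ (u - s)) t = ∫ t in (0:ℝ)..T, itg L k γ t := by
  have hfun : ∀ t : ℝ, itg L k (fun u => γ (u - s)) t = itg L k γ (t - s) := by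
    intro t
    unfold itg
    rw [deriv_comp_sub_const]
  simp_rw [hfun]
  have := intervalIntegral.integral_comp_sub_right (a := s) (b := s + T) (fun t => itg L k γ t) s
  simpa using this



noncomputable def pfun (τ t : ℝ) : ℝ := t * (1 - t / τ) ^ 2
noncomputable def qfun (τ t : ℝ) : ℝ := (t ^ 2 / τ) * (t / τ - 1)
noncomputable def pd (τ t : ℝ) : ℝ := (1 - t / τ) ^ 2 - t * (2 * (1 - t / τ) * (1 / τ))
noncomputable def qd (τ t : ℝ) : ℝ := (2 * t / τ) * (t / τ - 1) + (t ^ 2 / τ) * (1 / τ)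

lemma pfun_hasDerivAt (τ t : ℝ) : HasDerivAt (pfun τ) (pd τ t) t := by
  have h : HasDerivAt (fun t => t * (1 - t / τ) ^ 2)
      (1 * (1 - t / τ) ^ 2 + t * ((↑2 * (1 - t / τ) ^ (2 - 1)) * (0 - 1 / τ))) t := by
    exact (hasDerivAt_id t).mul (((hasDerivAt_const t (1:ℝ)).sub ((hasDerivAt_id t).div_const τ)).pow 2)
  convert h using 1
  · rfl
  unfold pd
  push_cast
  ring

lemma qfun_hasDerivAt (τ t : ℝ) : HasDerivAt (qfun τ) (qd τ t) t := by
  have h : HasDerivAt (fun t => (t ^ 2 / τ) * (t / τ - 1))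
      ((↑2 * t ^ (2 - 1) / τ) * (t / τ - 1) + (t ^ 2 / τ) * (1 / τ - 0)) t := by
    exact (((hasDerivAt_pow 2 t).div_const τ)).mul (((hasDerivAt_id t).div_const τ).sub (hasDerivAt_const t 1))
  convert h using 1
  · rfl
  unfold qd
  push_cast
  ring

noncomputable def bridge (τ : ℝ) (y v1 v2 : F) (t : ℝ) : F :=
  y + pfun τ t • v1 + qfun τ t • v2

lemma bridge_hasDerivAt (τ : ℝ) (y v1 v2 : F) (t : ℝ) :
    HasDerivAt (bridge τ y v1 v2) (pd τ t • v1 + qd τ t • v2) t := by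
  have h := (((pfun_hasDerivAt τ t).smul_const v1).const_add y).add
    ((qfun_hasDerivAt τ t).smul_const v2)
  exact h

lemma bridge_deriv (τ : ℝ) (y v1 v2 : F) (t : ℝ) :
    deriv (bridge τ y v1 v2) t = pd τ t • v1 + qd τ t • v2 :=
  (bridge_hasDerivAt τ y v1 v2 t).deriv

lemma bridge_contDiff (τ : ℝ) (y v1 v2 : F) : ContDiff ℝ 1 (bridge τ y v1 v2) := by
  unfold bridge pfun qfun
  simp only [div_eq_mul_inv]
  fun_prop

lemma bridge_zero (τ : ℝ) (y v1 v2 : F) : bridge τ y v1 v2 0 = y := by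
  simp [bridge, pfun, qfun]

lemma bridge_end {τ : ℝ} (hτ : τ ≠ 0) (y v1 v2 : F) : bridge τ y v1 v2 τ = y := by
  simp [bridge, pfun, qfun, div_self hτ]

lemma pd_zero (τ : ℝ) : pd τ 0 = 1 := by simp [pd]
lemma qd_zero (τ : ℝ) : qd τ 0 = 0 := by simp [qd]
lemma pd_end {τ : ℝ} (hτ : τ ≠ 0) : pd τ τ = 0 := by
  simp [pd, div_self hτ]
lemma qd_end {τ : ℝ} (hτ : τ ≠ 0) : qd τ τ = 1 := by
  unfold qd
  field_simp
  ring

lemma bridge_deriv_zero (τ : ℝ) (y v1 v2 : F) : deriv (bridge τ y v1 v2) 0 = v1 := by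
  rw [bridge_deriv, pd_zero, qd_zero]; simp

lemma bridge_deriv_end {τ : ℝ} (hτ : τ ≠ 0) (y v1 v2 : F) : deriv (bridge τ y v1 v2) τ = v2 := by
  rw [bridge_deriv, pd_end hτ, qd_end hτ]; simp

lemma pfun_bound {τ t : ℝ} (hτ : 0 < τ) (ht : t ∈ Icc 0 τ) : |pfun τ t| ≤ τ := by
  have h1 : 0 ≤ t / τ := div_nonneg ht.1 hτ.le
  have h2 : t / τ ≤ 1 := (div_le_one hτ).2 ht.2
  have h3 : 0 ≤ (1 - t/τ)^2 := sq_nonneg _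
  have h4 : (1 - t/τ)^2 ≤ 1 := by nlinarith
  unfold pfun
  rw [abs_of_nonneg (by nlinarith [ht.1])]
  nlinarith [ht.1, ht.2]

lemma qfun_bound {τ t : ℝ} (hτ : 0 < τ) (ht : t ∈ Icc 0 τ) : |qfun τ t| ≤ τ := by
  have h1 : 0 ≤ t / τ := div_nonneg ht.1 hτ.le
  have h2 : t / τ ≤ 1 := (div_le_one hτ).2 ht.2
  have hq : qfun τ t = τ * ((t/τ)^2 * (t/τ - 1)) := by
    unfold qfun; field_simp
  rw [hq, abs_mul, abs_of_pos hτ]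
  have : |(t/τ)^2 * (t/τ - 1)| ≤ 1 := by
    rw [abs_mul]
    have e1 : |(t/τ)^2| ≤ 1 := by rw [abs_of_nonneg (sq_nonneg _)]; nlinarith
    have e2 : |t/τ - 1| ≤ 1 := by rw [abs_le]; constructor <;> linarith
    exact mul_le_one₀ e1 (abs_nonneg _) e2
  nlinarith [hτ.le]

lemma pd_bound {τ t : ℝ} (hτ : 0 < τ) (ht : t ∈ Icc 0 τ) : |pd τ t| ≤ 2 := by
  have h1 : 0 ≤ t / τ := div_nonneg ht.1 hτ.le
  have h2 : t / τ ≤ 1 := (div_le_one hτ).2 ht.2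
  have hp : pd τ t = (1 - t/τ)^2 - 2 * (t/τ) * (1 - t/τ) := by
    unfold pd; field_simp
  rw [hp, abs_le]
  constructor <;> nlinarith

lemma qd_bound {τ t : ℝ} (hτ : 0 < τ) (ht : t ∈ Icc 0 τ) : |qd τ t| ≤ 2 := by
  have h1 : 0 ≤ t / τ := div_nonneg ht.1 hτ.le
  have h2 : t / τ ≤ 1 := (div_le_one hτ).2 ht.2
  have hq : qd τ t = 2 * (t/τ) * (t/τ - 1) + (t/τ)^2 := by
    unfold qd; field_simp
  rw [hq, abs_le]
  constructor <;> nlinarith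



include hL in
lemma bridge_exists [FiniteDimensional ℝ F] (y v1 v2 : F) (k : ℝ)
    {ε : ℝ} (hε : 0 < ε) :
    ∃ τ : ℝ, 0 < τ ∧ ContDiffOn ℝ 1 (bridge τ y v1 v2) (Icc 0 τ) ∧
      bridge τ y v1 v2 0 = y ∧ bridge τ y v1 v2 τ = y ∧
      derivWithin (bridge τ y v1 v2) (Icc 0 τ) 0 = v1 ∧
      derivWithin (bridge τ y v1 v2) (Icc 0 τ) τ = v2 ∧
      |∫ t in (0:ℝ)..τ, itg L k (bridge τ y v1 v2) t| ≤ ε := by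
  set R := ‖v1‖ + ‖v2‖ with hR
  have hR0 : (0:ℝ) ≤ R := by positivity
  obtain ⟨M, hM⟩ := ((isCompact_closedBall y R).prod
    (isCompact_closedBall (0:F) (2 * R))).exists_bound_of_continuousOn hL.continuousOn
  have hM0 : 0 ≤ M := le_trans (norm_nonneg _)
    (hM (y, 0) ⟨Metric.mem_closedBall_self hR0, by simp [Metric.mem_closedBall_self]; positivity⟩)
  set τ := min 1 (ε / (M + |k| + 1)) with hτdef
  have hτpos : 0 < τ := lt_min one_pos (div_pos hε (by positivity))
  have hτ1 : τ ≤ 1 := min_le_left _ _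
  have hτ2 : τ ≤ ε / (M + |k| + 1) := min_le_right _ _
  refine ⟨τ, hτpos, (bridge_contDiff τ y v1 v2).contDiffOn, bridge_zero τ y v1 v2,
    bridge_end hτpos.ne' y v1 v2, ?_, ?_, ?_⟩
  · rw [((bridge_contDiff τ y v1 v2).differentiable one_ne_zero _).derivWithin
      ((uniqueDiffOn_Icc hτpos) 0 (left_mem_Icc.2 hτpos.le))]
    exact bridge_deriv_zero τ y v1 v2
  · rw [((bridge_contDiff τ y v1 v2).differentiable one_ne_zero _).derivWithin
      ((uniqueDiffOn_Icc hτpos) τ (right_mem_Icc.2 hτpos.le))]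
    exact bridge_deriv_end hτpos.ne' y v1 v2
  · have hbound : ∀ t ∈ Ι (0:ℝ) τ, ‖itg L k (bridge τ y v1 v2) t‖ ≤ M + |k| := by
      intro t ht
      rw [uIoc_of_le hτpos.le] at ht
      have htm : t ∈ Icc 0 τ := ⟨ht.1.le, ht.2⟩
      have hmem : (bridge τ y v1 v2 t, deriv (bridge τ y v1 v2) t) ∈
          Metric.closedBall y R ×ˢ Metric.closedBall (0:F) (2 * R) := by
        constructor
        · rw [Metric.mem_closedBall, dist_eq_norm]
          have : bridge τ y v1 v2 t - y = pfun τ t • v1 + qfun τ t • v2 := by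
            unfold bridge; abel
          rw [this]
          calc ‖pfun τ t • v1 + qfun τ t • v2‖ ≤ ‖pfun τ t • v1‖ + ‖qfun τ t • v2‖ :=
                norm_add_le _ _
            _ = |pfun τ t| * ‖v1‖ + |qfun τ t| * ‖v2‖ := by
                rw [norm_smul, norm_smul, Real.norm_eq_abs, Real.norm_eq_abs]
            _ ≤ τ * ‖v1‖ + τ * ‖v2‖ := by
                gcongr
                exacts [pfun_bound hτpos htm, qfun_bound hτpos htm]
            _ = τ * R := by rw [hR]; ring
            _ ≤ R := by nlinarith
        · rw [Metric.mem_closedBall, dist_zero_right, bridge_deriv]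
          calc ‖pd τ t • v1 + qd τ t • v2‖ ≤ ‖pd τ t • v1‖ + ‖qd τ t • v2‖ := norm_add_le _ _
            _ = |pd τ t| * ‖v1‖ + |qd τ t| * ‖v2‖ := by
                rw [norm_smul, norm_smul, Real.norm_eq_abs, Real.norm_eq_abs]
            _ ≤ 2 * ‖v1‖ + 2 * ‖v2‖ := by
                gcongr
                exacts [pd_bound hτpos htm, qd_bound hτpos htm]
            _ = 2 * R := by rw [hR]; ring
      have := hM _ hmem
      calc ‖itg L k (bridge τ y v1 v2) t‖
          ≤ ‖L (bridge τ y v1 v2 t) (deriv (bridge τ y v1 v2) t)‖ + ‖k‖ := norm_add_le _ _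
        _ ≤ M + |k| := by
            rw [Real.norm_eq_abs k]
            exact add_le_add this le_rfl
    have h1 : ‖∫ t in (0:ℝ)..τ, itg L k (bridge τ y v1 v2) t‖ ≤ (M + |k|) * |τ - 0| :=
      intervalIntegral.norm_integral_le_of_norm_le_const hbound
    rw [Real.norm_eq_abs] at h1
    refine h1.trans ?_
    rw [sub_zero, abs_of_pos hτpos]
    have hD : (0:ℝ) < M + |k| + 1 := by positivity
    calc (M + |k|) * τ ≤ (M + |k| + 1) * τ := by nlinarith
      _ ≤ (M + |k| + 1) * (ε / (M + |k| + 1)) := by nlinarith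
      _ = ε := by field_simp



include hL in
lemma integral_shift_k (hT : 0 < T) (hγ : ContDiffOn ℝ 1 γ (Icc 0 T)) (k k0 : ℝ) :
    ∫ t in (0:ℝ)..T, itg L k γ t = (∫ t in (0:ℝ)..T, itg L k0 γ t) + (k - k0) * T := by
  have h1 : IntervalIntegrable (itg L k0 γ) volume 0 T := itg_intervalIntegrable hL hT hγ
  have h2 : (fun t => itg L k γ t) = fun t => itg L k0 γ t + (k - k0) := by
    funext t; unfold itg; ring
  rw [h2, intervalIntegral.integral_add h1 intervalIntegrable_const,
    intervalIntegral.integral_const]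
  simp [smul_eq_mul]
  ring

include hL in
lemma concat_bound [FiniteDimensional ℝ F]
    (hS : ∀ (T : ℝ) (γ : ℝ → F), 0 < T → ContDiffOn ℝ 1 γ (Icc 0 T) → γ 0 = γ T →
      0 ≤ ∫ t in (0:ℝ)..T, itg L k γ t)
    {T1 T2 : ℝ} {γ1 γ2 : ℝ → F} (hT1 : 0 < T1) (hT2 : 0 < T2)
    (hγ1 : ContDiffOn ℝ 1 γ1 (Icc 0 T1)) (hγ2 : ContDiffOn ℝ 1 γ2 (Icc 0 T2))
    (hxy : γ1 T1 = γ2 0) (hyx : γ2 T2 = γ1 0) :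
    0 ≤ (∫ t in (0:ℝ)..T1, itg L k γ1 t) + ∫ t in (0:ℝ)..T2, itg L k γ2 t := by
  have key : ∀ ε : ℝ, 0 < ε →
      -ε ≤ (∫ t in (0:ℝ)..T1, itg L k γ1 t) + ∫ t in (0:ℝ)..T2, itg L k γ2 t := by
    intro ε hε
    obtain ⟨τ, hτ, hβcd, hβ0, hβτ, hβd0, hβdτ, hβint⟩ :=
      bridge_exists hL (γ1 T1) (derivWithin γ1 (Icc 0 T1) T1) (derivWithin γ2 (Icc 0 T2) 0) k hε
    have hβscd : ContDiffOn ℝ 1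
        (fun t => bridge τ (γ1 T1) (derivWithin γ1 (Icc 0 T1) T1) (derivWithin γ2 (Icc 0 T2) 0) (t - T1))
        (Icc T1 (T1 + τ)) := shift_contDiffOn hβcd
    have hj1v : γ1 T1 = (fun t => bridge τ (γ1 T1) (derivWithin γ1 (Icc 0 T1) T1)
        (derivWithin γ2 (Icc 0 T2) 0) (t - T1)) T1 := by
      simp only [sub_self, hβ0]
    have hj1d : derivWithin γ1 (Icc 0 T1) T1 =
        derivWithin (fun t => bridge τ (γ1 T1) (derivWithin γ1 (Icc 0 T1) T1)
          (derivWithin γ2 (Icc 0 T2) 0) (t - T1)) (Icc T1 (T1 + τ)) T1 := by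
      rw [shift_derivWithin hτ hβcd (left_mem_Icc.2 (by linarith)), sub_self, hβd0]
    obtain ⟨hg12cd, hg12eq⟩ := glue_contDiffOn hT1 (by linarith : T1 < T1 + τ) hγ1 hβscd hj1v hj1d
    have hg12v : glue T1 γ1 (fun t => bridge τ (γ1 T1) (derivWithin γ1 (Icc 0 T1) T1)
        (derivWithin γ2 (Icc 0 T2) 0) (t - T1)) (T1 + τ) = γ2 0 := by
      show (if T1 + τ ≤ T1 then _ else _) = γ2 0
      rw [if_neg (by linarith)]
      simp only [add_sub_cancel_left]
      rw [hβτ, hxy]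
    have hg12d : derivWithin (glue T1 γ1 (fun t => bridge τ (γ1 T1) (derivWithin γ1 (Icc 0 T1) T1)
        (derivWithin γ2 (Icc 0 T2) 0) (t - T1))) (Icc 0 (T1 + τ)) (T1 + τ) =
        derivWithin γ2 (Icc 0 T2) 0 := by
      rw [hg12eq (right_mem_Icc.2 (by linarith))]
      show (if T1 + τ ≤ T1 then _ else _) = _
      rw [if_neg (by linarith)]
      rw [shift_derivWithin hτ hβcd (right_mem_Icc.2 (by linarith)), add_sub_cancel_left, hβdτ]
    have hγ2scd : ContDiffOn ℝ 1 (fun t => γ2 (t - (T1 + τ))) (Icc (T1 + τ) (T1 + τ + T2)) :=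
      shift_contDiffOn hγ2
    have hj2v : glue T1 γ1 (fun t => bridge τ (γ1 T1) (derivWithin γ1 (Icc 0 T1) T1)
        (derivWithin γ2 (Icc 0 T2) 0) (t - T1)) (T1 + τ) = (fun t => γ2 (t - (T1 + τ))) (T1 + τ) := by
      rw [hg12v]; simp
    have hj2d : derivWithin (glue T1 γ1 (fun t => bridge τ (γ1 T1) (derivWithin γ1 (Icc 0 T1) T1)
        (derivWithin γ2 (Icc 0 T2) 0) (t - T1))) (Icc 0 (T1 + τ)) (T1 + τ) =
        derivWithin (fun t => γ2 (t - (T1 + τ))) (Icc (T1 + τ) (T1 + τ + T2)) (T1 + τ) := by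
      rw [hg12d, shift_derivWithin hT2 hγ2 (left_mem_Icc.2 (by linarith)), sub_self]
    obtain ⟨hhcd, _⟩ := glue_contDiffOn (by linarith : (0:ℝ) < T1 + τ)
      (by linarith : T1 + τ < T1 + τ + T2) hg12cd hγ2scd hj2v hj2d
    have hh0 : glue (T1 + τ) (glue T1 γ1 (fun t => bridge τ (γ1 T1) (derivWithin γ1 (Icc 0 T1) T1)
        (derivWithin γ2 (Icc 0 T2) 0) (t - T1))) (fun t => γ2 (t - (T1 + τ))) 0 = γ1 0 := by
      show (if (0:ℝ) ≤ T1 + τ then (if (0:ℝ) ≤ T1 then _ else _) else _) = γ1 0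
      rw [if_pos (by linarith), if_pos hT1.le]
    have hhT : glue (T1 + τ) (glue T1 γ1 (fun t => bridge τ (γ1 T1) (derivWithin γ1 (Icc 0 T1) T1)
        (derivWithin γ2 (Icc 0 T2) 0) (t - T1))) (fun t => γ2 (t - (T1 + τ))) (T1 + τ + T2) = γ1 0 := by
      show (if T1 + τ + T2 ≤ T1 + τ then _ else _) = γ1 0
      rw [if_neg (by linarith)]
      simp only [add_sub_cancel_left]
      exact hyx
    have h0le := hS (T1 + τ + T2) _ (by linarith) hhcd (hh0.trans hhT.symm)
    have hi2 := glue_integral hL (k := k) (by linarith : (0:ℝ) < T1 + τ)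
      (by linarith : T1 + τ < T1 + τ + T2) hg12cd hγ2scd hj2v hj2d
    have hi1 := glue_integral hL (k := k) hT1 (by linarith : T1 < T1 + τ) hγ1 hβscd hj1v hj1d
    have hiβ : ∫ t in T1..(T1 + τ), itg L k (fun t => bridge τ (γ1 T1)
        (derivWithin γ1 (Icc 0 T1) T1) (derivWithin γ2 (Icc 0 T2) 0) (t - T1)) t
        = ∫ t in (0:ℝ)..τ, itg L k (bridge τ (γ1 T1) (derivWithin γ1 (Icc 0 T1) T1)
          (derivWithin γ2 (Icc 0 T2) 0)) t := shift_integral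
    have hiγ2 : ∫ t in (T1 + τ)..(T1 + τ + T2), itg L k (fun t => γ2 (t - (T1 + τ))) t
        = ∫ t in (0:ℝ)..T2, itg L k γ2 t := shift_integral
    rw [hi2, hi1, hiβ, hiγ2] at h0le
    have habs := abs_le.1 hβint
    linarith [habs.1, habs.2]
  by_contra hneg
  push_neg at hneg
  have := key (-(((∫ t in (0:ℝ)..T1, itg L k γ1 t) + ∫ t in (0:ℝ)..T2, itg L k γ2 t)) / 2)
    (by linarith)
  linarith

include hL in
lemma close_up [FiniteDimensional ℝ F] (hT : 0 < T)
    (hγ : ContDiffOn ℝ 1 γ (Icc 0 T)) (hclosed : γ T = γ 0) {ε : ℝ} (hε : 0 < ε) :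
    ∃ P : ℝ, ∃ δ : ℝ → F, 0 < P ∧ ContDiffOn ℝ 1 δ (Icc 0 P) ∧ δ 0 = γ 0 ∧ δ P = γ 0 ∧
      derivWithin δ (Icc 0 P) P = derivWithin δ (Icc 0 P) 0 ∧
      (∫ t in (0:ℝ)..P, itg L k δ t) ≤ (∫ t in (0:ℝ)..T, itg L k γ t) + ε := by
  obtain ⟨τ, hτ, hβcd, hβ0, hβτ, hβd0, hβdτ, hβint⟩ :=
    bridge_exists hL (γ T) (derivWithin γ (Icc 0 T) T) (derivWithin γ (Icc 0 T) 0) k hε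
  have hβscd : ContDiffOn ℝ 1
      (fun t => bridge τ (γ T) (derivWithin γ (Icc 0 T) T) (derivWithin γ (Icc 0 T) 0) (t - T))
      (Icc T (T + τ)) := shift_contDiffOn hβcd
  have hjv : γ T = (fun t => bridge τ (γ T) (derivWithin γ (Icc 0 T) T)
      (derivWithin γ (Icc 0 T) 0) (t - T)) T := by
    simp only [sub_self, hβ0]
  have hjd : derivWithin γ (Icc 0 T) T =
      derivWithin (fun t => bridge τ (γ T) (derivWithin γ (Icc 0 T) T)
        (derivWithin γ (Icc 0 T) 0) (t - T)) (Icc T (T + τ)) T := by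
    rw [shift_derivWithin hτ hβcd (left_mem_Icc.2 (by linarith)), sub_self, hβd0]
  obtain ⟨hcd, heq⟩ := glue_contDiffOn hT (by linarith : T < T + τ) hγ hβscd hjv hjd
  have hint := glue_integral hL (k := k) hT (by linarith : T < T + τ) hγ hβscd hjv hjd
  have hiβ : ∫ t in T..(T + τ), itg L k (fun t => bridge τ (γ T)
      (derivWithin γ (Icc 0 T) T) (derivWithin γ (Icc 0 T) 0) (t - T)) t
      = ∫ t in (0:ℝ)..τ, itg L k (bridge τ (γ T) (derivWithin γ (Icc 0 T) T)
        (derivWithin γ (Icc 0 T) 0)) t := shift_integral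
  refine ⟨T + τ, _, by linarith, hcd, ?_, ?_, ?_, ?_⟩
  · show (if (0:ℝ) ≤ T then _ else _) = γ 0
    rw [if_pos hT.le]
  · show (if T + τ ≤ T then _ else _) = γ 0
    rw [if_neg (by linarith)]
    simp only [add_sub_cancel_left]
    rw [hβτ, hclosed]
  · rw [heq (right_mem_Icc.2 (by linarith)), heq (left_mem_Icc.2 (by linarith))]
    show (if T + τ ≤ T then _ else _) = (if (0:ℝ) ≤ T then _ else _)
    rw [if_neg (by linarith), if_pos hT.le]
    rw [shift_derivWithin hτ hβcd (right_mem_Icc.2 (by linarith)), add_sub_cancel_left, hβdτ]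
  · rw [hint, hiβ]
    have habs := abs_le.1 hβint
    linarith [habs.1, habs.2]

include hL in
lemma iterate (hP : 0 < T) (hδ : ContDiffOn ℝ 1 γ (Icc 0 T)) (hcl : γ T = γ 0)
    (hder : derivWithin γ (Icc 0 T) T = derivWithin γ (Icc 0 T) 0) :
    ∀ m : ℕ, ∃ g : ℝ → F, ContDiffOn ℝ 1 g (Icc 0 ((m + 1) * T)) ∧ g 0 = γ 0 ∧
      g ((m + 1) * T) = γ 0 ∧
      derivWithin g (Icc 0 ((m + 1) * T)) ((m + 1) * T) = derivWithin γ (Icc 0 T) 0 ∧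
      derivWithin g (Icc 0 ((m + 1) * T)) 0 = derivWithin γ (Icc 0 T) 0 ∧
      (∫ t in (0:ℝ)..((m + 1) * T), itg L k g t) = (m + 1) * ∫ t in (0:ℝ)..T, itg L k γ t := by
  intro m
  induction m with
  | zero =>
    refine ⟨γ, ?_, rfl, ?_, ?_, ?_, ?_⟩ <;>
      simp only [Nat.cast_zero, zero_add, one_mul] <;> simp [hδ, hcl, hder]
  | succ m ih =>
    obtain ⟨g, hgcd, hg0, hgP, hgdP, hgd0, hgint⟩ := ih
    have hs0 : (0:ℝ) < ((m:ℝ) + 1) * T := by positivity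
    have hend : ((((m:ℕ)+1:ℕ):ℝ) + 1) * T = ((m:ℝ) + 1) * T + T := by push_cast; ring
    have hδscd : ContDiffOn ℝ 1 (fun t => γ (t - ((m:ℝ) + 1) * T))
        (Icc (((m:ℝ) + 1) * T) (((m:ℝ) + 1) * T + T)) := shift_contDiffOn hδ
    have hjv : g (((m:ℝ) + 1) * T) = (fun t => γ (t - ((m:ℝ) + 1) * T)) (((m:ℝ) + 1) * T) := by
      simp only [sub_self]
      rw [hgP]
    have hjd : derivWithin g (Icc 0 (((m:ℝ) + 1) * T)) (((m:ℝ) + 1) * T) =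
        derivWithin (fun t => γ (t - ((m:ℝ) + 1) * T))
          (Icc (((m:ℝ) + 1) * T) (((m:ℝ) + 1) * T + T)) (((m:ℝ) + 1) * T) := by
      rw [shift_derivWithin hP hδ (left_mem_Icc.2 (by linarith)), sub_self, hgdP]
    obtain ⟨hcd, heq⟩ := glue_contDiffOn hs0 (by linarith) hgcd hδscd hjv hjd
    have hint := glue_integral hL (k := k) hs0 (by linarith) hgcd hδscd hjv hjd
    have hiδ : ∫ t in (((m:ℝ) + 1) * T)..((((m:ℝ) + 1) * T) + T),
        itg L k (fun t => γ (t - ((m:ℝ) + 1) * T)) t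
        = ∫ t in (0:ℝ)..T, itg L k γ t := shift_integral
    refine ⟨glue (((m:ℝ) + 1) * T) g (fun t => γ (t - ((m:ℝ) + 1) * T)), ?_, ?_, ?_, ?_, ?_, ?_⟩
    · rw [hend]; exact hcd
    · show (if (0:ℝ) ≤ ((m:ℝ) + 1) * T then _ else _) = γ 0
      rw [if_pos hs0.le]; exact hg0
    · rw [hend]
      show (if ((m:ℝ) + 1) * T + T ≤ ((m:ℝ) + 1) * T then _ else _) = γ 0
      rw [if_neg (by linarith)]
      simp only [add_sub_cancel_left]
      exact hcl
    · rw [hend, heq (right_mem_Icc.2 (by linarith))]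
      show (if ((m:ℝ) + 1) * T + T ≤ ((m:ℝ) + 1) * T then _ else _) = _
      rw [if_neg (by linarith)]
      rw [shift_derivWithin hP hδ (right_mem_Icc.2 (by linarith)), add_sub_cancel_left, hder]
    · rw [hend, heq (left_mem_Icc.2 (by linarith))]
      show (if (0:ℝ) ≤ ((m:ℝ) + 1) * T then _ else _) = _
      rw [if_pos hs0.le]
      exact hgd0
    · rw [hend, hint, hiδ, hgint]
      push_cast
      ring
end CurveAux

open Set intervalIntegral

/-- For `k ≥ c(L)` the symmetrization of the action potential is nonnegative
(so `d_k(x,y) = Φ_k(x,y) + Φ_k(y,x)` is a pseudo-metric), while for `k < c(L)`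
the action is unbounded below (`Φ_k ≡ −∞`) on some pair of points. -/
theorem action_potential_symmetrization {n : ℕ}
    (L : EuclideanSpace ℝ (Fin n) → EuclideanSpace ℝ (Fin n) → ℝ)
    (hLcont : Continuous (fun q : EuclideanSpace ℝ (Fin n) × EuclideanSpace ℝ (Fin n) => L q.1 q.2))
    (hLconv : ∀ x, ConvexOn ℝ univ (L x))
    (hLsuper : ∀ x, ∀ C : ℝ, ∃ R : ℝ, ∀ v : EuclideanSpace ℝ (Fin n), R ≤ ‖v‖ → C * ‖v‖ ≤ L x v)
    (Act : ℝ → EuclideanSpace ℝ (Fin n) → EuclideanSpace ℝ (Fin n) → Set ℝ)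
    (hAct : ∀ k x y, Act k x y = {A : ℝ | ∃ (T : ℝ) (γ : ℝ → EuclideanSpace ℝ (Fin n)),
      0 < T ∧ ContDiffOn ℝ 1 γ (Icc 0 T) ∧ γ 0 = x ∧ γ T = y ∧
      A = ∫ t in (0:ℝ)..T, (L (γ t) (deriv γ t) + k)})
    (c : ℝ)
    (hc : IsGLB {k : ℝ | ∀ (T : ℝ) (γ : ℝ → EuclideanSpace ℝ (Fin n)),
      0 < T → ContDiffOn ℝ 1 γ (Icc 0 T) → γ 0 = γ T →
      0 ≤ ∫ t in (0:ℝ)..T, (L (γ t) (deriv γ t) + k)} c)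
    (Φ : ℝ → EuclideanSpace ℝ (Fin n) → EuclideanSpace ℝ (Fin n) → ℝ)
    (hΦ : ∀ k x y, Φ k x y = sInf (Act k x y))
    (hfin : ∀ k, c ≤ k → ∀ x y, (Act k x y).Nonempty ∧ BddBelow (Act k x y)) :
    (∀ k, c ≤ k → ∀ x y, 0 ≤ Φ k x y + Φ k y x) ∧
    (∀ k, k < c → ∃ x y : EuclideanSpace ℝ (Fin n), ¬ BddBelow (Act k x y)) := by
  classical
  set S : Set ℝ := {k : ℝ | ∀ (T : ℝ) (γ : ℝ → EuclideanSpace ℝ (Fin n)),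
      0 < T → ContDiffOn ℝ 1 γ (Icc 0 T) → γ 0 = γ T →
      0 ≤ ∫ t in (0:ℝ)..T, (L (γ t) (deriv γ t) + k)} with hSdef
  have hmono : ∀ k0 ∈ S, ∀ k1 : ℝ, k0 ≤ k1 → k1 ∈ S := by
    intro k0 hk0 k1 hk01 T γ hT hγ hcl
    have h0 : (0:ℝ) ≤ ∫ t in (0:ℝ)..T, CurveAux.itg L k0 γ t := hk0 T γ hT hγ hcl
    have heq := CurveAux.integral_shift_k hLcont hT hγ k1 k0
    show (0:ℝ) ≤ ∫ t in (0:ℝ)..T, CurveAux.itg L k1 γ t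
    rw [heq]
    nlinarith [mul_nonneg (sub_nonneg.2 hk01) hT.le]
  have hgt : ∀ k1 : ℝ, c < k1 → k1 ∈ S := by
    intro k1 hk1
    have hnl : k1 ∉ lowerBounds S := fun h => absurd (hc.2 h) (not_le.2 hk1)
    rw [lowerBounds, mem_setOf_eq] at hnl
    push_neg at hnl
    obtain ⟨k0, hk0S, hk0⟩ := hnl
    exact hmono k0 hk0S k1 hk0.le
  have hcS : c ∈ S := by
    intro T γ hT hγ hcl
    by_contra hneg
    push_neg at hneg
    have hIneg : (∫ t in (0:ℝ)..T, CurveAux.itg L c γ t) < 0 := hneg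
    set I := ∫ t in (0:ℝ)..T, CurveAux.itg L c γ t with hI
    have hk' : c + (-I) / (2 * T) ∈ S := hgt _ (by
      have : 0 < (-I) / (2 * T) := div_pos (by linarith) (by linarith)
      linarith)
    have h2 : (0:ℝ) ≤ ∫ t in (0:ℝ)..T, CurveAux.itg L (c + (-I) / (2 * T)) γ t :=
      hk' T γ hT hγ hcl
    have heq := CurveAux.integral_shift_k hLcont hT hγ (c + (-I) / (2 * T)) c
    rw [heq] at h2
    have harith : (c + (-I) / (2 * T) - c) * T = -I / 2 := by
      field_simp
      ring
    rw [harith] at h2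
    rw [← hI] at h2
    linarith
  have hS : ∀ k, c ≤ k → k ∈ S := fun k hk =>
    hk.eq_or_lt.elim (fun h => h ▸ hcS) (fun h => hgt k h)
  refine ⟨?_, ?_⟩
  · intro k hk x y
    obtain ⟨hne1, hbd1⟩ := hfin k hk x y
    obtain ⟨hne2, hbd2⟩ := hfin k hk y x
    have key : ∀ A ∈ Act k x y, ∀ B ∈ Act k y x, 0 ≤ A + B := by
      intro A hA B hB
      rw [hAct] at hA hB
      obtain ⟨T1, γ1, hT1, hγ1, hx1, hy1, hAeq⟩ := hA
      obtain ⟨T2, γ2, hT2, hγ2, hy2, hx2, hBeq⟩ := hB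
      have hSk : ∀ (T : ℝ) (γ : ℝ → EuclideanSpace ℝ (Fin n)), 0 < T →
          ContDiffOn ℝ 1 γ (Icc 0 T) → γ 0 = γ T →
          0 ≤ ∫ t in (0:ℝ)..T, CurveAux.itg L k γ t := hS k hk
      have hcb := CurveAux.concat_bound hLcont hSk hT1 hT2 hγ1 hγ2
        (by rw [hy1, hy2]) (by rw [hx2, hx1])
      rw [hAeq, hBeq]
      exact hcb
    rw [hΦ, hΦ]
    have h2 : ∀ A ∈ Act k x y, -A ≤ sInf (Act k y x) :=
      fun A hA => le_csInf hne2 (fun B hB => by linarith [key A hA B hB])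
    have h3 : -sInf (Act k y x) ≤ sInf (Act k x y) :=
      le_csInf hne1 (fun A hA => by linarith [h2 A hA])
    linarith
  · intro k hk
    have hknS : k ∉ S := fun h => absurd (hc.1 h) (not_le.2 hk)
    rw [hSdef, mem_setOf_eq] at hknS
    push_neg at hknS
    obtain ⟨T, γ, hT, hγ, hcl, hneg⟩ := hknS
    have hIneg : (∫ t in (0:ℝ)..T, CurveAux.itg L k γ t) < 0 := hneg
    obtain ⟨P, δ, hP, hδ, hδ0, hδP, hδd, hδint⟩ :=
      CurveAux.close_up hLcont hT hγ hcl.symm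
        (ε := -(∫ t in (0:ℝ)..T, CurveAux.itg L k γ t) / 2) (by linarith)
    set J := ∫ t in (0:ℝ)..P, CurveAux.itg L k δ t with hJ
    have hJneg : J < 0 := by rw [hJ]; linarith
    refine ⟨γ 0, γ 0, ?_⟩
    rintro ⟨b, hb⟩
    obtain ⟨m, hm⟩ := exists_nat_gt (b / J)
    obtain ⟨g, hgcd, hg0, hgP, _, _, hgint⟩ :=
      CurveAux.iterate hLcont hP hδ (hδP.trans hδ0.symm) hδd m
    have hmem : ((m:ℝ) + 1) * J ∈ Act k (γ 0) (γ 0) := by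
      rw [hAct]
      exact ⟨((m:ℝ) + 1) * P, g, by positivity, hgcd, by rw [hg0, hδ0], by rw [hgP, hδ0],
        by rw [← hgint]; rfl⟩
    have hble := hb hmem
    have hb2 : (b / J) * J = b := div_mul_cancel₀ b (ne_of_lt hJneg)
    nlinarith [mul_lt_mul_of_neg_right hm hJneg]
end
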